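/- If h₁, h₂ are free generators of a free subgroup of SL₂(ℝ), then for any R ∈ ℕ the elements g_r = h₁^r · h₂^r for r = 1, …, R freely generate a free subgroup of rank R. -/

import Mathlib

namespace Stmt2Aux

open FreeGroup List

/-- "Non-cancelling" relation on letters: if same generator then same sign. -/
def NC {β : Type*} (p q : β × Bool) : Prop := p.1 = q.1 → p.2 = q.2

lemma NC_refl {β : Type*} (p : β × Bool) : NC p p := fun _ => rfl

lemma NC_of_ne {β : Type*} {p q : β × Bool} (h : p.1 ≠ q.1) : NC p q :=
  fun hh => absurd hh h

variable {β : Type*}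

/-- A word whose adjacent letters never cancel is reduced. -/
lemma reduce_eq_self_of_chain [DecidableEq β] :
    ∀ {L : List (β × Bool)}, L.Chain' NC → FreeGroup.reduce L = L := by
  intro L hL
  induction L with
  | nil => simp
  | cons p L ih =>
    rw [FreeGroup.reduce.cons, ih hL.tail]
    cases L with
    | nil => rfl
    | cons q M =>
      have hpq : NC p q := (List.isChain_cons_cons.mp hL).1
      have hno : ¬(p.1 = q.1 ∧ p.2 = !q.2) := by
        rintro ⟨h1, h2⟩
        rw [hpq h1] at h2
        simp at h2
      simp [hno]

/-- The reduced form of any word satisfies the non-cancelling chain condition. -/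
lemma chain_reduce [DecidableEq β] (L : List (β × Bool)) :
    (FreeGroup.reduce L).Chain' NC := by
  induction L with
  | nil => exact List.isChain_nil
  | cons p L ih =>
    rw [FreeGroup.reduce.cons]
    rcases h : FreeGroup.reduce L with _ | ⟨q, M⟩
    · exact List.isChain_singleton _
    · rw [h] at ih
      dsimp only
      split_ifs with hc
      · exact ih.tail
      · refine List.isChain_cons_cons.mpr ⟨?_, ih⟩
        intro h1
        by_contra h2
        exact hc ⟨h1, by cases hp : p.2 <;> cases hq : q.2 <;> simp_all⟩

lemma chain_toWord [DecidableEq β] (z : FreeGroup β) : z.toWord.Chain' NC := by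
  rw [← FreeGroup.reduce_toWord]
  exact chain_reduce _

lemma mk_ne_one_of_chain [DecidableEq β] {L : List (β × Bool)} (hL : L.Chain' NC)
    (hne : L ≠ []) : FreeGroup.mk L ≠ 1 := by
  intro h
  apply hne
  have : (FreeGroup.mk L).toWord = [] := by rw [h, FreeGroup.toWord_one]
  rwa [FreeGroup.toWord_mk, reduce_eq_self_of_chain hL] at this

lemma chain_replicate_append {x : β × Bool} {M : List (β × Bool)} (hM : M.Chain' NC)
    (hx : ∀ c ∈ M.head?, NC x c) (n : ℕ) :
    (List.replicate n x ++ M).Chain' NC := by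
  induction n with
  | zero => simpa
  | succ n ih =>
    rw [List.replicate_succ, List.cons_append, List.Chain', List.isChain_cons]
    refine ⟨?_, ih⟩
    intro c hc
    cases n with
    | zero => exact hx c (by simpa using hc)
    | succ n =>
      rw [List.replicate_succ, List.cons_append, List.head?_cons, Option.mem_some_iff] at hc
      exact hc ▸ NC_refl x

lemma chain_replicate (n : ℕ) (x : β × Bool) : (List.replicate n x).Chain' NC := by
  simpa using chain_replicate_append (M := ([] : List (β × Bool)))
    List.isChain_nil (by simp) n

lemma head?_replicate_append (y : β × Bool) (k : ℕ) (M : List (β × Bool)) :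
    (List.replicate (k + 1) y ++ M).head? = some y := by
  rw [List.replicate_succ, List.cons_append, List.head?_cons]

lemma head?_replicate (y : β × Bool) (k : ℕ) :
    (List.replicate (k + 1) y).head? = some y := by
  rw [List.replicate_succ, List.head?_cons]

lemma mk_replicate_true' (a : β) (n : ℕ) :
    FreeGroup.mk (List.replicate n (a, true)) = FreeGroup.of a ^ n := by
  classical
  conv_rhs => rw [← FreeGroup.mk_toWord (x := FreeGroup.of a ^ n)]
  rw [FreeGroup.toWord_of_pow]

lemma mk_replicate_false' (a : β) (n : ℕ) :
    FreeGroup.mk (List.replicate n (a, false)) = (FreeGroup.of a ^ n)⁻¹ := by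
  classical
  have h1 : (FreeGroup.of a ^ n)⁻¹ = (FreeGroup.mk (List.replicate n (a, true)))⁻¹ := by
    rw [mk_replicate_true']
  rw [h1, FreeGroup.inv_mk]
  congr 1
  simp [FreeGroup.invRev]

lemma mk_replicate_true (a : β) (n : ℕ) (M : List (β × Bool)) :
    FreeGroup.mk (List.replicate n (a, true) ++ M) = FreeGroup.of a ^ n * FreeGroup.mk M := by
  rw [← FreeGroup.mul_mk, mk_replicate_true']

lemma mk_replicate_false (a : β) (n : ℕ) (M : List (β × Bool)) :
    FreeGroup.mk (List.replicate n (a, false) ++ M) =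
      (FreeGroup.of a ^ n)⁻¹ * FreeGroup.mk M := by
  rw [← FreeGroup.mul_mk, mk_replicate_false']

lemma mk_cons_true (r : β) (w : List (β × Bool)) :
    FreeGroup.mk ((r, true) :: w) = FreeGroup.of r * FreeGroup.mk w := by
  rw [show FreeGroup.of r = FreeGroup.mk [(r, true)] from rfl, FreeGroup.mul_mk]
  rfl

lemma mk_cons_false (r : β) (w : List (β × Bool)) :
    FreeGroup.mk ((r, false) :: w) = (FreeGroup.of r)⁻¹ * FreeGroup.mk w := by
  have h1 : (FreeGroup.of r)⁻¹ = FreeGroup.mk [(r, false)] := by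
    rw [show FreeGroup.of r = FreeGroup.mk [(r, true)] from rfl, FreeGroup.inv_mk]
    congr 1
  rw [h1, FreeGroup.mul_mk]
  rfl

section Key

variable {R : ℕ}

/-- The substitution homomorphism `F_R → F_2`, `r ↦ x^(r+1) y^(r+1)`. -/
noncomputable def φ (R : ℕ) : FreeGroup (Fin R) →* FreeGroup (Fin 2) :=
  FreeGroup.lift fun r : Fin R =>
    FreeGroup.of (0 : Fin 2) ^ ((r : ℕ) + 1) * FreeGroup.of (1 : Fin 2) ^ ((r : ℕ) + 1)

local notation "X" => FreeGroup.of (0 : Fin 2)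
local notation "Y" => FreeGroup.of (1 : Fin 2)

lemma φ_of (r : Fin R) : φ R (FreeGroup.of r) = X ^ ((r : ℕ) + 1) * Y ^ ((r : ℕ) + 1) :=
  FreeGroup.lift_apply_of

/-- Head-form invariant for the image word. -/
def HeadForm : List (Fin R × Bool) → List (Fin 2 × Bool) → Prop
  | [], L => L = []
  | (r, true) :: _, L => ∃ c M, c.1 = (1 : Fin 2) ∧
      L = List.replicate ((r : ℕ) + 1) ((0 : Fin 2), true) ++ c :: M
  | (r, false) :: _, L => ∃ c M, c.1 = (0 : Fin 2) ∧
      L = List.replicate ((r : ℕ) + 1) ((1 : Fin 2), false) ++ c :: M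

lemma key (w : List (Fin R × Bool)) (hw : w.Chain' NC) :
    ∃ L : List (Fin 2 × Bool), L.Chain' NC ∧
      FreeGroup.mk L = φ R (FreeGroup.mk w) ∧ HeadForm w L := by
  induction w with
  | nil =>
    refine ⟨[], List.isChain_nil, ?_, rfl⟩
    rw [← FreeGroup.one_eq_mk, show (FreeGroup.mk [] : FreeGroup (Fin R)) = 1 from FreeGroup.one_eq_mk.symm, _root_.map_one]
  | cons p w' ih =>
    obtain ⟨L', hL', hmk', hhf'⟩ := ih hw.tail
    obtain ⟨r, b⟩ := p
    cases b
    · -- head letter is r⁻¹ ; block is Y^{-(i+1)} X^{-(i+1)}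
      have hφmk : φ R (FreeGroup.mk ((r, false) :: w')) =
          (Y ^ ((r : ℕ) + 1))⁻¹ * ((X ^ ((r : ℕ) + 1))⁻¹ * φ R (FreeGroup.mk w')) := by
        rw [mk_cons_false, _root_.map_mul, _root_.map_inv, φ_of, mul_inv_rev, mul_assoc]
      match w', hhf' with
      | [], hhf' =>
        have hL'nil : L' = [] := hhf'
        refine ⟨List.replicate ((r : ℕ) + 1) ((1 : Fin 2), false) ++
            List.replicate ((r : ℕ) + 1) ((0 : Fin 2), false), ?_, ?_, ?_⟩
        · refine chain_replicate_append (chain_replicate _ _) ?_ _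
          intro c hc
          rw [head?_replicate, Option.mem_some_iff] at hc
          subst hc
          exact NC_of_ne (by decide)
        · rw [mk_replicate_false, mk_replicate_false', hφmk, ← FreeGroup.one_eq_mk,
            _root_.map_one, mul_one]
        · exact ⟨((0 : Fin 2), false), List.replicate (r : ℕ) ((0 : Fin 2), false), rfl, by
            rw [← List.replicate_succ]⟩
      | (s, false) :: w'', hhf' =>
        obtain ⟨c, M, hc1, hLeq⟩ := hhf'
        refine ⟨List.replicate ((r : ℕ) + 1) ((1 : Fin 2), false) ++
            (List.replicate ((r : ℕ) + 1) ((0 : Fin 2), false) ++ L'), ?_, ?_, ?_⟩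
        · refine chain_replicate_append (chain_replicate_append hL' ?_ _) ?_ _
          · intro d hd
            rw [hLeq, head?_replicate_append, Option.mem_some_iff] at hd
            subst hd
            exact NC_of_ne (by decide)
          · intro d hd
            rw [head?_replicate_append, Option.mem_some_iff] at hd
            subst hd
            exact NC_of_ne (by decide)
        · rw [mk_replicate_false, mk_replicate_false, hmk', hφmk]
        · exact ⟨((0 : Fin 2), false),
            List.replicate (r : ℕ) ((0 : Fin 2), false) ++ L', rfl, by
              rw [← List.cons_append, ← List.replicate_succ]⟩
      | (s, true) :: w'', hhf' =>
        obtain ⟨c, M, hc1, hLeq⟩ := hhf'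
        have hij : (r : ℕ) ≠ (s : ℕ) := by
          have hNC : NC (r, false) (s, true) := (List.isChain_cons_cons.mp hw).1
          intro h
          have hrs : r = s := Fin.val_injective h
          simpa using hNC (by rw [hrs])
        have hcM : (c :: M).Chain' NC := by
          rw [hLeq] at hL'
          exact (List.isChain_append.mp hL').2.1
        have hmkcM : FreeGroup.mk (c :: M) =
            (X ^ ((s : ℕ) + 1))⁻¹ * φ R (FreeGroup.mk ((s, true) :: w'')) := by
          rw [← hmk', hLeq, mk_replicate_true]
          group
        rcases lt_or_gt_of_ne hij with hlt | hgt
        · -- (r:ℕ) < (s:ℕ) : leftover X^{j-i} with letters (0,true)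
          obtain ⟨k, hk⟩ : ∃ k, (s : ℕ) - (r : ℕ) = k + 1 := ⟨(s : ℕ) - (r : ℕ) - 1, by omega⟩
          refine ⟨List.replicate ((r : ℕ) + 1) ((1 : Fin 2), false) ++
              (List.replicate ((s : ℕ) - (r : ℕ)) ((0 : Fin 2), true) ++ c :: M), ?_, ?_, ?_⟩
          · refine chain_replicate_append (chain_replicate_append hcM ?_ _) ?_ _
            · intro d hd
              rw [List.head?_cons, Option.mem_some_iff] at hd
              subst hd
              exact NC_of_ne (by rw [hc1]; decide)
            · intro d hd
              rw [hk, head?_replicate_append, Option.mem_some_iff] at hd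
              subst hd
              exact NC_of_ne (by decide)
          · rw [mk_replicate_false, mk_replicate_true, hmkcM, hφmk]
            have hsplit : X ^ ((s : ℕ) + 1) = X ^ ((r : ℕ) + 1) * X ^ ((s : ℕ) - (r : ℕ)) := by
              rw [← pow_add]; congr 1; omega
            rw [hsplit]
            group
          · refine ⟨((0 : Fin 2), true),
              List.replicate k ((0 : Fin 2), true) ++ c :: M, rfl, by
                simp [hk, List.replicate_succ]⟩
        · -- (r:ℕ) > (s:ℕ) : leftover X^{-(i-j)} with letters (0,false)
          obtain ⟨k, hk⟩ : ∃ k, (r : ℕ) - (s : ℕ) = k + 1 := ⟨(r : ℕ) - (s : ℕ) - 1, by omega⟩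
          refine ⟨List.replicate ((r : ℕ) + 1) ((1 : Fin 2), false) ++
              (List.replicate ((r : ℕ) - (s : ℕ)) ((0 : Fin 2), false) ++ c :: M), ?_, ?_, ?_⟩
          · refine chain_replicate_append (chain_replicate_append hcM ?_ _) ?_ _
            · intro d hd
              rw [List.head?_cons, Option.mem_some_iff] at hd
              subst hd
              exact NC_of_ne (by rw [hc1]; decide)
            · intro d hd
              rw [hk, head?_replicate_append, Option.mem_some_iff] at hd
              subst hd
              exact NC_of_ne (by decide)
          · rw [mk_replicate_false, mk_replicate_false, hmkcM, hφmk]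
            have hsplit : X ^ ((r : ℕ) + 1) = X ^ ((r : ℕ) - (s : ℕ)) * X ^ ((s : ℕ) + 1) := by
              rw [← pow_add]; congr 1; omega
            rw [hsplit]
            group
          · refine ⟨((0 : Fin 2), false),
              List.replicate k ((0 : Fin 2), false) ++ c :: M, rfl, by
                simp [hk, List.replicate_succ]⟩
    · -- head letter is r ; block is X^{i+1} Y^{i+1}
      have hφmk : φ R (FreeGroup.mk ((r, true) :: w')) =
          X ^ ((r : ℕ) + 1) * (Y ^ ((r : ℕ) + 1) * φ R (FreeGroup.mk w')) := by
        rw [mk_cons_true, _root_.map_mul, φ_of, mul_assoc]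
      match w', hhf' with
      | [], hhf' =>
        have hL'nil : L' = [] := hhf'
        refine ⟨List.replicate ((r : ℕ) + 1) ((0 : Fin 2), true) ++
            List.replicate ((r : ℕ) + 1) ((1 : Fin 2), true), ?_, ?_, ?_⟩
        · refine chain_replicate_append (chain_replicate _ _) ?_ _
          intro c hc
          rw [head?_replicate, Option.mem_some_iff] at hc
          subst hc
          exact NC_of_ne (by decide)
        · rw [mk_replicate_true, mk_replicate_true', hφmk, ← FreeGroup.one_eq_mk,
            _root_.map_one, mul_one]
        · exact ⟨((1 : Fin 2), true), List.replicate (r : ℕ) ((1 : Fin 2), true), rfl, by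
            rw [← List.replicate_succ]⟩
      | (s, true) :: w'', hhf' =>
        obtain ⟨c, M, hc1, hLeq⟩ := hhf'
        refine ⟨List.replicate ((r : ℕ) + 1) ((0 : Fin 2), true) ++
            (List.replicate ((r : ℕ) + 1) ((1 : Fin 2), true) ++ L'), ?_, ?_, ?_⟩
        · refine chain_replicate_append (chain_replicate_append hL' ?_ _) ?_ _
          · intro d hd
            rw [hLeq, head?_replicate_append, Option.mem_some_iff] at hd
            subst hd
            exact NC_of_ne (by decide)
          · intro d hd
            rw [head?_replicate_append, Option.mem_some_iff] at hd
            subst hd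
            exact NC_of_ne (by decide)
        · rw [mk_replicate_true, mk_replicate_true, hmk', hφmk]
        · exact ⟨((1 : Fin 2), true),
            List.replicate (r : ℕ) ((1 : Fin 2), true) ++ L', rfl, by
              rw [← List.cons_append, ← List.replicate_succ]⟩
      | (s, false) :: w'', hhf' =>
        obtain ⟨c, M, hc1, hLeq⟩ := hhf'
        have hij : (r : ℕ) ≠ (s : ℕ) := by
          have hNC : NC (r, true) (s, false) := (List.isChain_cons_cons.mp hw).1
          intro h
          have hrs : r = s := Fin.val_injective h
          simpa using hNC (by rw [hrs])
        have hcM : (c :: M).Chain' NC := by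
          rw [hLeq] at hL'
          exact (List.isChain_append.mp hL').2.1
        have hmkcM : FreeGroup.mk (c :: M) =
            Y ^ ((s : ℕ) + 1) * φ R (FreeGroup.mk ((s, false) :: w'')) := by
          rw [← hmk', hLeq, mk_replicate_false]
          group
        rcases lt_or_gt_of_ne hij with hlt | hgt
        · -- (r:ℕ) < (s:ℕ) : leftover Y^{-(j-i)} with letters (1,false)
          obtain ⟨k, hk⟩ : ∃ k, (s : ℕ) - (r : ℕ) = k + 1 := ⟨(s : ℕ) - (r : ℕ) - 1, by omega⟩
          refine ⟨List.replicate ((r : ℕ) + 1) ((0 : Fin 2), true) ++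
              (List.replicate ((s : ℕ) - (r : ℕ)) ((1 : Fin 2), false) ++ c :: M), ?_, ?_, ?_⟩
          · refine chain_replicate_append (chain_replicate_append hcM ?_ _) ?_ _
            · intro d hd
              rw [List.head?_cons, Option.mem_some_iff] at hd
              subst hd
              exact NC_of_ne (by rw [hc1]; decide)
            · intro d hd
              rw [hk, head?_replicate_append, Option.mem_some_iff] at hd
              subst hd
              exact NC_of_ne (by decide)
          · rw [mk_replicate_true, mk_replicate_false, hmkcM, hφmk]
            have hsplit : Y ^ ((s : ℕ) + 1) = Y ^ ((s : ℕ) - (r : ℕ)) * Y ^ ((r : ℕ) + 1) := by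
              rw [← pow_add]; congr 1; omega
            rw [hsplit]
            group
          · refine ⟨((1 : Fin 2), false),
              List.replicate k ((1 : Fin 2), false) ++ c :: M, rfl, by
                simp [hk, List.replicate_succ]⟩
        · -- (r:ℕ) > (s:ℕ) : leftover Y^{i-j} with letters (1,true)
          obtain ⟨k, hk⟩ : ∃ k, (r : ℕ) - (s : ℕ) = k + 1 := ⟨(r : ℕ) - (s : ℕ) - 1, by omega⟩
          refine ⟨List.replicate ((r : ℕ) + 1) ((0 : Fin 2), true) ++
              (List.replicate ((r : ℕ) - (s : ℕ)) ((1 : Fin 2), true) ++ c :: M), ?_, ?_, ?_⟩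
          · refine chain_replicate_append (chain_replicate_append hcM ?_ _) ?_ _
            · intro d hd
              rw [List.head?_cons, Option.mem_some_iff] at hd
              subst hd
              exact NC_of_ne (by rw [hc1]; decide)
            · intro d hd
              rw [hk, head?_replicate_append, Option.mem_some_iff] at hd
              subst hd
              exact NC_of_ne (by decide)
          · rw [mk_replicate_true, mk_replicate_true, hmkcM, hφmk]
            have hsplit : Y ^ ((r : ℕ) + 1) = Y ^ ((r : ℕ) - (s : ℕ)) * Y ^ ((s : ℕ) + 1) := by
              rw [← pow_add]; congr 1; omega
            rw [hsplit]
            group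
          · refine ⟨((1 : Fin 2), true),
              List.replicate k ((1 : Fin 2), true) ++ c :: M, rfl, by
                simp [hk, List.replicate_succ]⟩

lemma φ_injective (R : ℕ) : Function.Injective (φ R) := by
  rw [injective_iff_map_eq_one]
  intro z hz
  by_contra hne
  obtain ⟨L, hL, hmk, hhf⟩ := key z.toWord (chain_toWord z)
  rw [FreeGroup.mk_toWord, hz] at hmk
  have hLnil : L = [] := by
    by_contra hLne
    exact mk_ne_one_of_chain hL hLne hmk
  have hwne : z.toWord ≠ [] := fun h => hne (FreeGroup.toWord_eq_nil_iff.mp h)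
  rcases hword : z.toWord with _ | ⟨⟨r, b⟩, w'⟩
  · exact hwne hword
  · rw [hword] at hhf
    cases b <;>
    · obtain ⟨c, M, -, hLeq⟩ := hhf
      rw [hLnil] at hLeq
      exact absurd hLeq.symm (by simp)

end Key

end Stmt2Aux

/-- If `h₁, h₂` freely generate a free subgroup of `SL₂(ℝ)`, then for any `R`,
the elements `g_r = h₁^r h₂^r`, `r = 1, …, R`, freely generate a free subgroup
of rank `R`. -/
theorem stmt2 (h₁ h₂ : Matrix.SpecialLinearGroup (Fin 2) ℝ)
    (hfree : Function.Injective
      (FreeGroup.lift ![h₁, h₂] : FreeGroup (Fin 2) →* Matrix.SpecialLinearGroup (Fin 2) ℝ))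
    (R : ℕ) :
    Function.Injective
      (FreeGroup.lift (fun r : Fin R => h₁ ^ ((r : ℕ) + 1) * h₂ ^ ((r : ℕ) + 1)) :
        FreeGroup (Fin R) →* Matrix.SpecialLinearGroup (Fin 2) ℝ) := by
  have hcomp : (FreeGroup.lift ![h₁, h₂]).comp (Stmt2Aux.φ R) =
      (FreeGroup.lift (fun r : Fin R => h₁ ^ ((r : ℕ) + 1) * h₂ ^ ((r : ℕ) + 1))) := by
    ext r
    simp [Stmt2Aux.φ, Matrix.cons_val_zero, Matrix.cons_val_one, Matrix.head_cons]
  rw [← hcomp, MonoidHom.coe_comp]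
  exact hfree.comp (Stmt2Aux.φ_injective R)
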